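/- Let √2 − 1 < α < 1 and let X be an ℕ-valued random variable satisfying the recursive distributional equation. Then there exists δ > 0 such that for all s ∈ (1−δ, 1), G(s) = Q₋(s) = (1/2)((2−p)s + p − √(((2−p)s + p)² − 4s·exp(α(s−1)))). -/

import Mathlib

open scoped ENNReal

/-- The Poisson(α) probability mass function on ℕ. -/
noncomputable def poissonPMF (α : ℝ) (k : ℕ) : ℝ≥0∞ :=
  ENNReal.ofReal (Real.exp (-α) * α ^ k / (Nat.factorial k))

/-- The Geometric(1/2) pmf: P(N = k) = (1/2)^(k+1) for k ≥ 0. -/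
noncomputable def geomHalf (k : ℕ) : ℝ≥0∞ := (1 / 2) ^ (k + 1)

/-- The law of (X - 1)⁺ when X has law μ on ℕ. -/
noncomputable def shiftLaw (μ : ℕ → ℝ≥0∞) (k : ℕ) : ℝ≥0∞ :=
  if k = 0 then μ 0 + μ 1 else μ (k + 1)

/-- Convolution of two (sub-)pmfs on ℕ: the law of an independent sum. -/
noncomputable def convAdd (f g : ℕ → ℝ≥0∞) (k : ℕ) : ℝ≥0∞ :=
  ∑ j ∈ Finset.range (k + 1), f j * g (k - j)

/-- n-fold convolution of a pmf on ℕ: the law of a sum of n i.i.d. copies. -/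
noncomputable def iterConv (f : ℕ → ℝ≥0∞) : ℕ → ℕ → ℝ≥0∞
  | 0 => fun k => if k = 0 then 1 else 0
  | n + 1 => convAdd (iterConv f n) f

/-- μ is the law of an ℕ-valued random variable X satisfying the RDE
    X =_d P + ∑_{i=1}^N (X_i - 1)⁺, with P ~ Poisson(α), N ~ Geom(1/2),
    X_i i.i.d. with law μ, all independent. -/
def SatisfiesRDE (α : ℝ) (μ : ℕ → ℝ≥0∞) : Prop :=
  (∑' k, μ k) = 1 ∧
  ∀ k, μ k = ∑' n, geomHalf n * convAdd (poissonPMF α) (iterConv (shiftLaw μ) n) k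

/-- The probability generating function G(s) = E[s^X]. -/
noncomputable def pgf (μ : ℕ → ℝ≥0∞) (s : ℝ) : ℝ := ∑' k, (μ k).toReal * s ^ k

/-- The mean E[X] = ∑ k · P(X = k), valued in [0,∞]. -/
noncomputable def meanENN (μ : ℕ → ℝ≥0∞) : ℝ≥0∞ := ∑' k : ℕ, (k : ℝ≥0∞) * μ k


namespace RDE14aux

noncomputable def epgf (f : ℕ → ℝ≥0∞) (x : ℝ≥0∞) : ℝ≥0∞ := ∑' k, f k * x ^ k

lemma cauchy (a b : ℕ → ℝ≥0∞) :
    (∑' n, ∑ j ∈ Finset.range (n + 1), a j * b (n - j)) = (∑' n, a n) * ∑' n, b n := by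
  have h1 : (∑' n, a n) * (∑' n, b n) = ∑' q : ℕ × ℕ, a q.1 * b q.2 := by
    rw [ENNReal.tsum_prod']
    simp_rw [ENNReal.tsum_mul_left]
    rw [ENNReal.tsum_mul_right]
  rw [h1, ← Finset.HasAntidiagonal.sigmaAntidiagonalEquivProd.tsum_eq (fun q : ℕ × ℕ => a q.1 * b q.2)]
  rw [ENNReal.tsum_sigma']
  congr 1; funext n
  rw [tsum_fintype]
  simp only [Finset.HasAntidiagonal.sigmaAntidiagonalEquivProd_apply]
  rw [Finset.sum_coe_sort (Finset.HasAntidiagonal.antidiagonal n) (fun q : ℕ × ℕ => a q.1 * b q.2)]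
  rw [Finset.Nat.sum_antidiagonal_eq_sum_range_succ_mk]

lemma epgf_convAdd (f g : ℕ → ℝ≥0∞) (x : ℝ≥0∞) :
    epgf (convAdd f g) x = epgf f x * epgf g x := by
  unfold epgf convAdd
  rw [← cauchy]
  congr 1; funext k
  rw [Finset.sum_mul]
  refine Finset.sum_congr rfl fun j hj => ?_
  have hjk : j ≤ k := Nat.lt_succ_iff.mp (Finset.mem_range.mp hj)
  have : x ^ k = x ^ j * x ^ (k - j) := by rw [← pow_add, Nat.add_sub_cancel' hjk]
  rw [this]; ring

lemma epgf_iterConv (f : ℕ → ℝ≥0∞) (x : ℝ≥0∞) (n : ℕ) :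
    epgf (iterConv f n) x = (epgf f x) ^ n := by
  induction n with
  | zero =>
    simp only [iterConv, epgf]
    rw [tsum_eq_single 0 (by intro b hb; simp [hb])]
    simp
  | succ n ih => rw [iterConv, epgf_convAdd, ih, pow_succ]

lemma rde_epgf {α : ℝ} {μ : ℕ → ℝ≥0∞} (hμ : SatisfiesRDE α μ) (x : ℝ≥0∞) :
    2 * epgf μ x = epgf (poissonPMF α) x + epgf μ x * epgf (shiftLaw μ) x := by
  obtain ⟨htot, hrec⟩ := hμ
  set P := epgf (poissonPMF α) x with hP
  set y := epgf (shiftLaw μ) x with hy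
  have hG : epgf μ x = ∑' n, geomHalf n * (P * y ^ n) := by
    unfold epgf
    calc ∑' k, μ k * x ^ k
        = ∑' k, ∑' n, geomHalf n * convAdd (poissonPMF α) (iterConv (shiftLaw μ) n) k * x ^ k := by
          congr 1; funext k; rw [hrec k, ENNReal.tsum_mul_right]
      _ = ∑' n, ∑' k, geomHalf n * (convAdd (poissonPMF α) (iterConv (shiftLaw μ) n) k * x ^ k) := by
          rw [ENNReal.tsum_comm]; simp_rw [mul_assoc]
      _ = ∑' n, geomHalf n * (P * y ^ n) := by
          congr 1; funext n
          rw [ENNReal.tsum_mul_left]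
          congr 1
          rw [← epgf_iterConv, ← epgf_convAdd]; rfl
  have h2g : ∀ n : ℕ, (2 : ℝ≥0∞) * geomHalf n = 2⁻¹ ^ n := by
    intro n
    simp only [geomHalf, one_div, pow_succ]
    rw [mul_comm ((2:ℝ≥0∞)⁻¹ ^ n) 2⁻¹, ← mul_assoc, ENNReal.mul_inv_cancel two_ne_zero ENNReal.ofNat_ne_top, one_mul]
  set z := 2⁻¹ * y with hz
  have hzn : ∀ n : ℕ, 2⁻¹ ^ n * y ^ n = z ^ n := fun n => (mul_pow _ _ _).symm
  have hgeom : ∑' n, (z : ℝ≥0∞) ^ n = 1 + z * ∑' n, z ^ n := by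
    conv_lhs => rw [tsum_eq_zero_add' ENNReal.summable]
    rw [pow_zero]
    congr 1
    calc ∑' n, z ^ (n + 1) = ∑' n, z * z ^ n := by
          congr 1; funext n; rw [pow_succ, mul_comm]
      _ = z * ∑' n, z ^ n := ENNReal.tsum_mul_left
  have hGy : epgf μ x * y = P * (z * ∑' n, z ^ n) := by
    rw [hG, ← ENNReal.tsum_mul_right, ← ENNReal.tsum_mul_left, ← ENNReal.tsum_mul_left]
    congr 1; funext n
    simp only [geomHalf, hz, one_div, mul_pow, pow_succ]
    ring
  calc 2 * epgf μ x = P * ∑' n, z ^ n := by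
        rw [hG, ← ENNReal.tsum_mul_left, ← ENNReal.tsum_mul_left]
        congr 1; funext n
        rw [← mul_assoc, h2g n]
        simp only [hz, mul_pow]
        ring
    _ = P + epgf μ x * y := by
        rw [hgeom, mul_add, mul_one, hGy]

lemma epgf_poisson {α : ℝ} (hα : 0 ≤ α) {s : ℝ} (hs : 0 ≤ s) :
    epgf (poissonPMF α) (ENNReal.ofReal s) = ENNReal.ofReal (Real.exp (α * (s - 1))) := by
  unfold epgf poissonPMF
  have hsum : Summable (fun k : ℕ => Real.exp (-α) * α ^ k / (Nat.factorial k) * s ^ k) := by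
    have := (Real.summable_pow_div_factorial (α * s)).mul_left (Real.exp (-α))
    refine this.congr fun k => ?_
    rw [mul_pow]; ring
  have hterm : ∀ k : ℕ, ENNReal.ofReal (Real.exp (-α) * α ^ k / (Nat.factorial k)) *
      (ENNReal.ofReal s) ^ k
      = ENNReal.ofReal (Real.exp (-α) * α ^ k / (Nat.factorial k) * s ^ k) := by
    intro k
    rw [← ENNReal.ofReal_pow hs, ← ENNReal.ofReal_mul]
    positivity
  simp_rw [hterm]
  rw [← ENNReal.ofReal_tsum_of_nonneg (fun k => by positivity) hsum]
  congr 1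
  have : ∀ k : ℕ, Real.exp (-α) * α ^ k / (Nat.factorial k) * s ^ k
      = Real.exp (-α) * ((α * s) ^ k / (Nat.factorial k)) := by
    intro k; rw [mul_pow]; ring
  simp_rw [this]
  rw [tsum_mul_left]
  have hexp : ∑' k : ℕ, (α * s) ^ k / (Nat.factorial k : ℝ) = Real.exp (α * s) := by
    rw [Real.exp_eq_exp_ℝ, NormedSpace.exp_eq_tsum_div]
  rw [hexp, ← Real.exp_add]
  ring_nf

lemma tsum_shiftLaw (μ : ℕ → ℝ≥0∞) : ∑' k, shiftLaw μ k = ∑' k, μ k := by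
  rw [tsum_eq_zero_add' ENNReal.summable, tsum_eq_zero_add' (f := μ) ENNReal.summable,
    tsum_eq_zero_add' (f := fun n => μ (n + 1)) ENNReal.summable]
  have hs0 : shiftLaw μ 0 = μ 0 + μ 1 := if_pos rfl
  have hs1 : ∀ k : ℕ, shiftLaw μ (k + 1) = μ (k + 2) := fun k => if_neg (Nat.succ_ne_zero k)
  simp_rw [hs0, hs1]
  ring

lemma epgf_shift (μ : ℕ → ℝ≥0∞) (x : ℝ≥0∞) :
    x * epgf (shiftLaw μ) x + μ 0 = epgf μ x + μ 0 * x := by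
  unfold epgf
  rw [← ENNReal.tsum_mul_left]
  rw [tsum_eq_zero_add' (f := fun k => x * (shiftLaw μ k * x ^ k)) ENNReal.summable]
  rw [tsum_eq_zero_add' (f := fun k => μ k * x ^ k) ENNReal.summable]
  rw [tsum_eq_zero_add' (f := fun k => μ (k + 1) * x ^ (k + 1)) ENNReal.summable]
  have hs0 : shiftLaw μ 0 = μ 0 + μ 1 := if_pos rfl
  have hs1 : ∀ k : ℕ, shiftLaw μ (k + 1) = μ (k + 2) := fun k => if_neg (Nat.succ_ne_zero k)
  have h1 : ∀ k : ℕ, x * (shiftLaw μ (k + 1) * x ^ (k + 1)) = μ (k + 2) * x ^ (k + 2) := by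
    intro k; rw [hs1, pow_succ]; ring
  simp_rw [h1, hs0, pow_zero]
  ring

noncomputable def Dfun (α p s : ℝ) : ℝ :=
  ((2 - p) * s + p) ^ 2 - 4 * s * Real.exp (α * (s - 1))
noncomputable def Dp1 (α p s : ℝ) : ℝ :=
  2 * ((2 - p) * s + p) * (2 - p) - (4 + 4 * s * α) * Real.exp (α * (s - 1))
noncomputable def Dp2 (α p s : ℝ) : ℝ :=
  2 * (2 - p) ^ 2 - (8 * α + 4 * s * α ^ 2) * Real.exp (α * (s - 1))

lemma hasDerivAt_expaff (α s : ℝ) :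
    HasDerivAt (fun t => Real.exp (α * (t - 1))) (α * Real.exp (α * (s - 1))) s := by
  have h : HasDerivAt (fun t : ℝ => α * (t - 1)) α s := by
    simpa using ((hasDerivAt_id s).sub_const (1:ℝ)).const_mul α
  simpa [mul_comm] using h.exp

lemma hasDerivAt_b (p s : ℝ) : HasDerivAt (fun t : ℝ => (2 - p) * t + p) (2 - p) s := by
  simpa using ((hasDerivAt_id s).const_mul (2 - p)).add_const p

lemma hasDerivAt_Dfun (α p s : ℝ) : HasDerivAt (Dfun α p) (Dp1 α p s) s := by
  have hb2 : HasDerivAt (fun t : ℝ => ((2 - p) * t + p) ^ 2)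
      (2 * ((2 - p) * s + p) ^ 1 * (2 - p)) s := (hasDerivAt_b p s).pow 2
  have hE : HasDerivAt (fun t : ℝ => 4 * t * Real.exp (α * (t - 1)))
      (4 * Real.exp (α * (s - 1)) + 4 * s * (α * Real.exp (α * (s - 1)))) s := by
    have := (((hasDerivAt_id s).const_mul (4:ℝ))).mul (hasDerivAt_expaff α s)
    simpa [mul_comm, mul_assoc, mul_left_comm, Pi.mul_def] using this
  have := hb2.sub hE
  refine this.congr_deriv ?_
  unfold Dp1; ring

lemma hasDerivAt_Dp1 (α p s : ℝ) : HasDerivAt (Dp1 α p) (Dp2 α p s) s := by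
  have hb2 : HasDerivAt (fun t : ℝ => 2 * ((2 - p) * t + p) * (2 - p)) ((2 - p) * (2 * (2 - p))) s := by
    have h := ((hasDerivAt_b p s).const_mul (2:ℝ)).mul_const (2 - p)
    simpa [mul_comm, mul_assoc, mul_left_comm] using h
  have hE : HasDerivAt (fun t : ℝ => (4 + 4 * t * α) * Real.exp (α * (t - 1)))
      (4 * α * Real.exp (α * (s - 1)) + (4 + 4 * s * α) * (α * Real.exp (α * (s - 1)))) s := by
    have hlin : HasDerivAt (fun t : ℝ => 4 + 4 * t * α) (4 * α) s := by
      have : HasDerivAt (fun t : ℝ => 4 * t * α) (4 * α) s := by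
        simpa [mul_comm, mul_assoc] using ((hasDerivAt_id s).const_mul (4:ℝ)).mul_const α
      simpa using (this.const_add (4:ℝ))
    exact hlin.mul (hasDerivAt_expaff α s)
  have := hb2.sub hE
  refine this.congr_deriv ?_
  unfold Dp2; ring

lemma Dfun_one (α p : ℝ) : Dfun α p 1 = 0 := by simp [Dfun]; ring

lemma Dp1_one (α p : ℝ) : Dp1 α p 1 = 4 * (1 - p - α) := by simp [Dp1]; ring

lemma Dp2_one (α p : ℝ) : Dp2 α p 1 = 2 * (2 - p) ^ 2 - (8 * α + 4 * α ^ 2) := by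
  simp [Dp2]


/-- If D ≥ 0 on [0,1] then p > 1 - α (under α > √2 - 1). -/
lemma p_gt (α p : ℝ) (hα0 : 0 < α) (hα2 : 2 < (1 + α) ^ 2)
    (hDnn : ∀ s ∈ Set.Icc (0:ℝ) 1, 0 ≤ Dfun α p s) : 1 - α < p := by
  by_contra hcon
  push_neg at hcon
  have key : ∃ δ : ℝ, 0 < δ ∧ δ ≤ 1/2 ∧ ∀ s ∈ Set.Ico (1 - δ) 1, 0 < Dp1 α p s := by
    rcases lt_or_eq_of_le hcon with hlt | heq
    · have hpos : 0 < Dp1 α p 1 := by rw [Dp1_one]; linarith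
      have hev : ∀ᶠ x in nhds (1:ℝ), 0 < Dp1 α p x :=
        ((hasDerivAt_Dp1 α p 1).continuousAt).eventually (eventually_gt_nhds hpos)
      obtain ⟨ε, hε, hball⟩ := Metric.eventually_nhds_iff.mp hev
      refine ⟨min (ε/2) (1/2), by positivity, min_le_right _ _, fun s hs => ?_⟩
      apply hball
      rw [Real.dist_eq, abs_sub_lt_iff]
      have h3 : min (ε/2) (1/2) ≤ ε/2 := min_le_left _ _
      have h1 : 1 - min (ε/2) (1/2) ≤ s := hs.1
      have h2 : s < 1 := hs.2
      constructor <;> linarith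
    · have hneg : Dp2 α p 1 < 0 := by
        rw [Dp2_one]
        have h2p : 2 - p = 1 + α := by rw [heq]; ring
        rw [h2p]; nlinarith
      have hev : ∀ᶠ x in nhds (1:ℝ), Dp2 α p x < 0 := by
        have hcont : Continuous (Dp2 α p) := by unfold Dp2; fun_prop
        exact hcont.continuousAt.eventually (eventually_lt_nhds hneg)
      obtain ⟨ε, hε, hball⟩ := Metric.eventually_nhds_iff.mp hev
      set δ := min (ε/2) (1/2) with hδdef
      have hδ0 : 0 < δ := by positivity
      have hδε : δ < ε := lt_of_le_of_lt (min_le_left _ _) (by linarith)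
      have hanti : StrictAntiOn (Dp1 α p) (Set.Icc (1-δ) 1) := by
        apply strictAntiOn_of_deriv_neg (convex_Icc _ _)
        · exact fun x _ =>
            (hasDerivAt_Dp1 α p x).differentiableAt.continuousAt.continuousWithinAt
        · intro x hx
          rw [interior_Icc] at hx
          rw [(hasDerivAt_Dp1 α p x).deriv]
          apply hball
          rw [Real.dist_eq, abs_sub_lt_iff]
          have := hx.1; have := hx.2
          constructor <;> linarith
      refine ⟨δ, hδ0, min_le_right _ _, fun s hs => ?_⟩
      have hlt : Dp1 α p 1 < Dp1 α p s := by
        apply hanti ⟨hs.1, hs.2.le⟩ ⟨by linarith [hδ0], le_refl 1⟩ hs.2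
      rw [Dp1_one] at hlt
      have : (1:ℝ) - p - α = 0 := by rw [heq]; ring
      linarith
  obtain ⟨δ, hδ0, hδh, hDp⟩ := key
  have hmono : StrictMonoOn (Dfun α p) (Set.Icc (1 - δ) 1) := by
    apply strictMonoOn_of_deriv_pos (convex_Icc _ _)
    · exact fun x _ =>
        (hasDerivAt_Dfun α p x).differentiableAt.continuousAt.continuousWithinAt
    · intro x hx
      rw [interior_Icc] at hx
      rw [(hasDerivAt_Dfun α p x).deriv]
      exact hDp x ⟨le_of_lt hx.1, hx.2⟩
  have h1 : (1 - δ/2 : ℝ) ∈ Set.Icc (1-δ) 1 := by constructor <;> linarith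
  have h2 : (1:ℝ) ∈ Set.Icc (1-δ) 1 := by constructor <;> linarith
  have h3 := hmono h1 h2 (by linarith)
  rw [Dfun_one] at h3
  have h4 := hDnn (1 - δ/2) ⟨by linarith, by linarith⟩
  linarith

/-- Quantitative lower bound: D(s) ≥ 2(p+α-1)(1-s) near 1. -/
lemma D_lower (α p : ℝ) (hc : 0 < p + α - 1) :
    ∃ δ : ℝ, 0 < δ ∧ δ ≤ 1/2 ∧
      ∀ s ∈ Set.Ico (1 - δ) 1, 2 * (p + α - 1) * (1 - s) ≤ Dfun α p s := by
  set c := p + α - 1 with hcdef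
  have hDp1 : Dp1 α p 1 < -(2*c) := by rw [Dp1_one]; linarith
  have hev : ∀ᶠ x in nhds (1:ℝ), Dp1 α p x < -(2*c) :=
    ((hasDerivAt_Dp1 α p 1).continuousAt).eventually (eventually_lt_nhds hDp1)
  obtain ⟨ε, hε, hball⟩ := Metric.eventually_nhds_iff.mp hev
  set δ := min (ε/2) (1/2) with hδdef
  have hδ0 : 0 < δ := by positivity
  have hδε : δ < ε := lt_of_le_of_lt (min_le_left _ _) (by linarith)
  have hH : ∀ x : ℝ, HasDerivAt (fun s => Dfun α p s + 2*c*s) (Dp1 α p x + 2*c) x := by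
    intro x
    exact (hasDerivAt_Dfun α p x).add (by simpa using (hasDerivAt_id x).const_mul (2*c))
  have hanti : StrictAntiOn (fun s => Dfun α p s + 2*c*s) (Set.Icc (1-δ) 1) := by
    apply strictAntiOn_of_deriv_neg (convex_Icc _ _)
    · exact fun x _ => (hH x).differentiableAt.continuousAt.continuousWithinAt
    · intro x hx
      rw [interior_Icc] at hx
      rw [(hH x).deriv]
      have hb : Dp1 α p x < -(2*c) := by
        apply hball
        rw [Real.dist_eq, abs_sub_lt_iff]
        have := hx.1; have := hx.2
        constructor <;> linarith
      linarith
  refine ⟨δ, hδ0, min_le_right _ _, fun s hs => ?_⟩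
  have hlt := hanti ⟨hs.1, hs.2.le⟩ ⟨by linarith, le_refl 1⟩ hs.2
  simp only [Dfun_one] at hlt
  linarith


lemma ne_top_of_tsum_one {f : ℕ → ℝ≥0∞} (htot : ∑' k, f k = 1) : ∀ k, f k ≠ ⊤ :=
  fun k => ne_top_of_le_ne_top ENNReal.one_ne_top (htot ▸ ENNReal.le_tsum k)

lemma toReal_epgf {f : ℕ → ℝ≥0∞} (hne : ∀ k, f k ≠ ⊤) {s : ℝ} (hs0 : 0 ≤ s) :
    (epgf f (ENNReal.ofReal s)).toReal = pgf f s := by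
  rw [epgf, ENNReal.tsum_toReal_eq
    (fun k => ENNReal.mul_ne_top (hne k) (ENNReal.pow_ne_top ENNReal.ofReal_ne_top))]
  unfold pgf
  congr 1; funext k
  rw [ENNReal.toReal_mul, ENNReal.toReal_pow, ENNReal.toReal_ofReal hs0]

lemma epgf_le_one {f : ℕ → ℝ≥0∞} (htot : ∑' k, f k = 1) {x : ℝ≥0∞} (hx : x ≤ 1) :
    epgf f x ≤ 1 := by
  rw [← htot]
  refine Summable.tsum_le_tsum (fun k => ?_) ENNReal.summable ENNReal.summable
  calc f k * x ^ k ≤ f k * 1 := mul_le_mul_right (pow_le_one' hx k) _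
    _ = f k := mul_one _

lemma pgf_one_eq {f : ℕ → ℝ≥0∞} (htot : ∑' k, f k = 1) : pgf f 1 = 1 := by
  have hne := ne_top_of_tsum_one htot
  rw [← toReal_epgf hne zero_le_one, ENNReal.ofReal_one]
  unfold epgf
  simp [htot]

end RDE14aux

/-- For √2 − 1 < α < 1, there exists δ > 0 such that G(s) = Q₋(s) for
all s ∈ (1−δ, 1). -/
theorem pgf_eq_Qminus_near_one_large_alpha
    (α : ℝ) (hα0 : Real.sqrt 2 - 1 < α) (hα1 : α < 1)
    (μ : ℕ → ℝ≥0∞) (hμ : SatisfiesRDE α μ)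
    (p : ℝ) (hp : p = (μ 0).toReal) :
    ∃ δ > (0 : ℝ), ∀ s ∈ Set.Ioo (1 - δ) 1,
      pgf μ s = (1 / 2) * ((2 - p) * s + p -
        Real.sqrt (((2 - p) * s + p) ^ 2 - 4 * s * Real.exp (α * (s - 1)))) := by
  classical
  open RDE14aux in
  obtain ⟨htot, -⟩ := id hμ
  have hνtot : ∑' k, shiftLaw μ k = 1 := by rw [tsum_shiftLaw, htot]
  have hμne := ne_top_of_tsum_one htot
  have hνne := ne_top_of_tsum_one hνtot
  have hsqrt2 : (1:ℝ) < Real.sqrt 2 := by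
    have := Real.sqrt_lt_sqrt (le_refl 0 |>.trans zero_le_one) (by norm_num : (1:ℝ) < 2)
    simpa using this
  have hα0' : 0 < α := by linarith
  have hα2 : 2 < (1 + α) ^ 2 := by
    have h1 : Real.sqrt 2 < 1 + α := by linarith
    have h2 : 0 ≤ Real.sqrt 2 := Real.sqrt_nonneg 2
    nlinarith [Real.sq_sqrt (by norm_num : (0:ℝ) ≤ 2)]
  have hp0 : 0 ≤ p := hp ▸ ENNReal.toReal_nonneg
  have hp1 : p ≤ 1 := by
    rw [hp]
    have := ENNReal.toReal_mono ENNReal.one_ne_top (htot ▸ ENNReal.le_tsum 0)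
    simpa using this
  -- the quadratic functional equation for pgf μ on [0,1]
  have hq : ∀ s ∈ Set.Icc (0:ℝ) 1,
      (2 * pgf μ s - ((2 - p) * s + p)) ^ 2 = Dfun α p s := by
    intro s hs
    obtain ⟨hs0, hs1⟩ := hs
    set x := ENNReal.ofReal s with hxdef
    have hx1 : x ≤ 1 := by
      rw [hxdef, ← ENNReal.ofReal_one]
      exact ENNReal.ofReal_le_ofReal hs1
    have hGfin : epgf μ x ≠ ⊤ :=
      ne_top_of_le_ne_top ENNReal.one_ne_top (epgf_le_one htot hx1)
    have hHfin : epgf (shiftLaw μ) x ≠ ⊤ :=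
      ne_top_of_le_ne_top ENNReal.one_ne_top (epgf_le_one hνtot hx1)
    have e1 : 2 * pgf μ s = Real.exp (α * (s - 1)) + pgf μ s * pgf (shiftLaw μ) s := by
      have h := congrArg ENNReal.toReal (rde_epgf hμ x)
      rw [ENNReal.toReal_mul, ENNReal.toReal_add (by
            rw [epgf_poisson hα0'.le hs0]; exact ENNReal.ofReal_ne_top)
          (ENNReal.mul_ne_top hGfin hHfin), ENNReal.toReal_mul,
        epgf_poisson hα0'.le hs0, ENNReal.toReal_ofReal (Real.exp_pos _).le,
        toReal_epgf hμne hs0, toReal_epgf hνne hs0] at h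
      simpa using h
    have e2 : s * pgf (shiftLaw μ) s + p = pgf μ s + p * s := by
      have h := congrArg ENNReal.toReal (epgf_shift μ x)
      rw [ENNReal.toReal_add (ENNReal.mul_ne_top ENNReal.ofReal_ne_top hHfin) (hμne 0),
        ENNReal.toReal_add hGfin (ENNReal.mul_ne_top (hμne 0) ENNReal.ofReal_ne_top),
        ENNReal.toReal_mul, ENNReal.toReal_mul,
        ENNReal.toReal_ofReal hs0, toReal_epgf hμne hs0, toReal_epgf hνne hs0, ← hp] at h
      exact h
    unfold Dfun
    linear_combination (-4*s) * e1 + (-4 * pgf μ s) * e2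
  have hDnn : ∀ s ∈ Set.Icc (0:ℝ) 1, 0 ≤ Dfun α p s := fun s hs => (hq s hs) ▸ sq_nonneg _
  have hpgt : 1 - α < p := p_gt α p hα0' hα2 hDnn
  have hc : 0 < p + α - 1 := by linarith
  obtain ⟨δ, hδ0, hδh, hDlow⟩ := D_lower α p hc
  set c := p + α - 1 with hcdef
  set δ' := min δ (2*c/((2-p)^2+1)) with hδ'def
  have hden : (0:ℝ) < (2-p)^2 + 1 := by positivity
  have hδ'0 : 0 < δ' := lt_min hδ0 (by positivity)
  have hδ'δ : δ' ≤ δ := min_le_left _ _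
  refine ⟨δ', hδ'0, fun s hs => ?_⟩
  obtain ⟨hs1, hs2⟩ := hs
  have hsgt : 1 - δ ≤ s := by
    have := hδ'δ; linarith
  have hs0 : 0 ≤ s := by
    have : δ ≤ 1/2 := hδh
    linarith
  have hsIcc : s ∈ Set.Icc (0:ℝ) 1 := ⟨hs0, hs2.le⟩
  have hqs := hq s hsIcc
  have hDs := hDlow s ⟨hsgt, hs2⟩
  have hG1 : pgf μ s ≤ 1 := by
    have hx1 : ENNReal.ofReal s ≤ 1 := by
      rw [← ENNReal.ofReal_one]; exact ENNReal.ofReal_le_ofReal hs2.le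
    have := ENNReal.toReal_mono ENNReal.one_ne_top (epgf_le_one htot hx1)
    rw [toReal_epgf hμne hs0] at this
    simpa using this
  -- the sign of 2G - b
  have hfle : 2 * pgf μ s - ((2 - p) * s + p) ≤ 0 := by
    by_contra hpos
    push_neg at hpos
    have hub : 2 * pgf μ s - ((2 - p) * s + p) ≤ (2 - p) * (1 - s) := by nlinarith
    have hsq : Dfun α p s ≤ ((2 - p) * (1 - s)) ^ 2 := by
      rw [← hqs]
      have h0 : 0 < 2 * pgf μ s - ((2 - p) * s + p) := hpos
      nlinarith
    have h1s0 : 0 < 1 - s := by linarith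
    have hsmall : (2 - p) ^ 2 * (1 - s) < 2 * c := by
      have h1s : 1 - s < δ' := by linarith
      have h2 : δ' ≤ 2*c/((2-p)^2+1) := min_le_right _ _
      have h3 : 1 - s < 2*c/((2-p)^2+1) := lt_of_lt_of_le h1s h2
      have h4 : (1 - s) * ((2-p)^2+1) < 2*c :=
        calc (1 - s) * ((2-p)^2+1) < 2*c/((2-p)^2+1) * ((2-p)^2+1) :=
              mul_lt_mul_of_pos_right h3 hden
          _ = 2*c := div_mul_cancel₀ _ (ne_of_gt hden)
      have h6 : (2-p)^2*(1-s) + (1-s) = (1-s)*((2-p)^2+1) := by ring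
      linarith
    have h5 : (2 - p)^2 * (1 - s)^2 < 2 * c * (1 - s) :=
      calc (2-p)^2*(1-s)^2 = (2-p)^2*(1-s)*(1-s) := by ring
        _ < 2*c*(1-s) := mul_lt_mul_of_pos_right hsmall h1s0
    rw [mul_pow] at hsq
    linarith
  -- conclude
  have hsqrt : Real.sqrt (((2 - p) * s + p) ^ 2 - 4 * s * Real.exp (α * (s - 1)))
      = ((2 - p) * s + p) - 2 * pgf μ s := by
    have : ((2 - p) * s + p) ^ 2 - 4 * s * Real.exp (α * (s - 1))
        = (2 * pgf μ s - ((2 - p) * s + p)) ^ 2 := by rw [hqs]; rfl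
    rw [this, Real.sqrt_sq_eq_abs, abs_of_nonpos hfle]
    ring
  rw [hsqrt]
  ring
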